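/- arXiv:0902.2144 — 6 statements merged into one kernel-verified Lean document; each statement's English description precedes it below -/
import Mathlib

section
/- Let P be a shrub, a and a' two vertices of height 0, and suppose there exist height-0 vertices a = a₀, a₁, …, a_ℓ = a' and height-1 vertices b₀, …, b_{ℓ−1} such that b_i covers both a_i and a_{i+1} for each i. Then there exists a single height-1 vertex c covering both a and a'. -/
/-- A shrub on a finite vertex type `V`: a graph together with a height function
satisfying the shrub axioms (edges between consecutive heights, every positive-height
vertex covers a vertex one lower, and the two forbidden induced patterns). -/
structure Shrub (V : Type*) [Fintype V] [DecidableEq V] where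
  adj : V → V → Prop
  symm : ∀ a b, adj a b → adj b a
  loopless : ∀ a, ¬ adj a a
  height : V → ℕ
  edge_height : ∀ a b, adj a b → height a = height b + 1 ∨ height b = height a + 1
  covers_below : ∀ a, 0 < height a → ∃ b, adj a b ∧ height b + 1 = height a
  patternA : ∀ a b c d e, a ≠ b → c ≠ d → c ≠ e → d ≠ e →
    height a = height c + 1 → height b = height c + 1 →
    height d = height c → height e = height c →
    adj a c → adj a d → adj b d → adj b e → ¬ adj a e → ¬ adj b c → False
  patternB : ∀ a b c d, b ≠ c →
    height a = height d + 2 → height b = height d + 1 → height c = height d + 1 →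
    adj a b → adj a c → adj b d → ¬ adj c d → False

variable {V : Type*} [Fintype V] [DecidableEq V]

/-- `P.Covers j i` means the vertex `j` covers `i` : they are joined by an edge and
`j` is one level higher than `i` (edges are oriented downward). -/
def Shrub.Covers (P : Shrub V) (j i : V) : Prop :=
  P.adj i j ∧ P.height i + 1 = P.height j

/-- The underlying simple graph of a shrub. -/
def Shrub.graph (P : Shrub V) : SimpleGraph V where
  Adj := P.adj
  symm := ⟨fun a b h => P.symm a b h⟩
  loopless := ⟨fun a h => P.loopless a h⟩


lemma key_merge (P : Shrub V) (a0 am am1 b c : V)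
    (h1 : P.Covers c a0) (h2 : P.Covers c am)
    (h3 : P.Covers b am) (h4 : P.Covers b am1) :
    ∃ c', P.Covers c' a0 ∧ P.Covers c' am1 := by
  obtain ⟨e1, ht1⟩ := h1
  obtain ⟨e2, ht2⟩ := h2
  obtain ⟨e3, ht3⟩ := h3
  obtain ⟨e4, ht4⟩ := h4
  have ham : P.height am = P.height a0 := by omega
  have ham1 : P.height am1 = P.height a0 := by omega
  have htc : P.height c = P.height a0 + 1 := by omega
  have htb : P.height b = P.height a0 + 1 := by omega
  by_cases hce : P.adj am1 c
  · exact ⟨c, ⟨e1, ht1⟩, hce, by omega⟩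
  by_cases hbc : P.adj a0 b
  · exact ⟨b, ⟨hbc, by omega⟩, e4, ht4⟩
  by_cases hcb : c = b
  · exact absurd (hcb ▸ e1) hbc
  by_cases hde : am = am1
  · exact ⟨c, ⟨e1, ht1⟩, hde ▸ e2, by omega⟩
  by_cases hcd : a0 = am
  · exact ⟨b, ⟨hcd ▸ e3, by omega⟩, e4, ht4⟩
  by_cases hce2 : a0 = am1
  · exact ⟨c, ⟨e1, ht1⟩, hce2 ▸ e1, by omega⟩
  exact absurd (P.patternA c b a0 am am1 hcb hcd hce2 hde htc (by omega) ham ham1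
    (P.symm _ _ e1) (P.symm _ _ e2) (P.symm _ _ e3) (P.symm _ _ e4)
    (fun h => hce (P.symm _ _ h)) (fun h => hbc (P.symm _ _ h))) id

/-- given a zigzag of height-1 vertices `b i` each covering the
consecutive height-0 vertices `a i`, `a (i+1)`, there is a single height-1 vertex
covering both endpoints. -/
theorem stmt1 (P : Shrub V) (ℓ : ℕ) (hℓ : 1 ≤ ℓ)
    (aS : Fin (ℓ + 1) → V) (bS : Fin ℓ → V)
    (ha : ∀ k, P.height (aS k) = 0) (hb : ∀ k, P.height (bS k) = 1)
    (hcov : ∀ k : Fin ℓ, P.Covers (bS k) (aS k.castSucc) ∧ P.Covers (bS k) (aS k.succ)) :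
    ∃ c, P.height c = 1 ∧ P.Covers c (aS 0) ∧ P.Covers c (aS (Fin.last ℓ)) := by
  have main : ∀ m : ℕ, (hm : m ≤ ℓ) →
      ∃ c, P.Covers c (aS 0) ∧ P.Covers c (aS ⟨m, by omega⟩) := by
    intro m
    induction m with
    | zero =>
      intro _
      have h := hcov ⟨0, hℓ⟩
      have h0 : (aS (Fin.castSucc ⟨0, hℓ⟩)) = aS 0 := by
        congr 1
      have h1 : (aS ⟨0, by omega⟩ : V) = aS 0 := by
        congr 1
      exact ⟨bS ⟨0, hℓ⟩, h0 ▸ h.1, h1 ▸ h0 ▸ h.1⟩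
    | succ m ih =>
      intro hm
      obtain ⟨c, hc0, hcm⟩ := ih (by omega)
      have h := hcov ⟨m, by omega⟩
      have h1 : (aS (Fin.castSucc ⟨m, by omega⟩)) = aS ⟨m, by omega⟩ := rfl
      have h2 : (aS (Fin.succ ⟨m, by omega⟩)) = aS ⟨m + 1, by omega⟩ := rfl
      obtain ⟨c', hc'1, hc'2⟩ := key_merge P (aS 0) (aS ⟨m, by omega⟩)
        (aS ⟨m + 1, by omega⟩) (bS ⟨m, by omega⟩) c hc0 hcm (h1 ▸ h.1) (h2 ▸ h.2)
      exact ⟨c', hc'1, hc'2⟩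
  obtain ⟨c, hc0, hcl⟩ := main ℓ le_rfl
  have hlast : (⟨ℓ, by omega⟩ : Fin (ℓ + 1)) = Fin.last ℓ := rfl
  refine ⟨c, ?_, hc0, hlast ▸ hcl⟩
  have := hc0.2
  rw [ha 0] at this
  omega
end

section
/- Let P be a connected shrub with at least two vertices. Then there exists at least one vertex of height 1 that is joined to every vertex of height 0. -/
variable {V : Type*} [Fintype V] [DecidableEq V]

/-- Auxiliary relation: two ground vertices share a common height-1 neighbour. -/
def shrubR (P : Shrub V) (x y : V) : Prop :=
  P.height x = 0 ∧ P.height y = 0 ∧ ∃ e, P.height e = 1 ∧ P.adj e x ∧ P.adj e y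

lemma shrub_nest (P : Shrub V) {e f d : V} (he : P.height e = 1) (hf : P.height f = 1)
    (hd : P.height d = 0) (hed : P.adj e d) (hfd : P.adj f d) :
    (∀ x, P.height x = 0 → P.adj e x → P.adj f x) ∨
    (∀ x, P.height x = 0 → P.adj f x → P.adj e x) := by
  by_contra h
  push_neg at h
  obtain ⟨⟨c, hc0, hec, hfc⟩, ⟨x, hx0, hfx, hex⟩⟩ := h
  have hef : e ≠ f := fun h => hfc (h ▸ hec)
  exact P.patternA e f c d x hef (fun h => hfc (h ▸ hfd)) (fun h => hfc (h ▸ hfx))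
    (fun h => hex (h ▸ hed)) (by omega) (by omega) (by omega) (by omega)
    hec hed hfd hfx hex hfc

lemma shrubR_symm (P : Shrub V) {a b : V} (h : shrubR P a b) : shrubR P b a := by
  obtain ⟨ha, hb, e, he, h1, h2⟩ := h
  exact ⟨hb, ha, e, he, h2, h1⟩

lemma shrubR_trans (P : Shrub V) {a b c : V} (h1 : shrubR P a b) (h2 : shrubR P b c) :
    shrubR P a c := by
  obtain ⟨ha, hb, e, he, hea, heb⟩ := h1
  obtain ⟨_, hc, f, hf, hfb, hfc⟩ := h2
  rcases shrub_nest P he hf hb heb hfb with h | h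
  · exact ⟨ha, hc, f, hf, h a ha hea, hfc⟩
  · exact ⟨ha, hc, e, he, hea, h c hc hfc⟩

lemma shrub_eqvgen_R (P : Shrub V) {a b : V} (h : Relation.EqvGen (shrubR P) a b) :
    a = b ∨ shrubR P a b := by
  induction h with
  | rel a b h => exact Or.inr h
  | refl a => exact Or.inl rfl
  | symm a b _ ih =>
    rcases ih with rfl | h
    · exact Or.inl rfl
    · exact Or.inr (shrubR_symm P h)
  | trans a b c _ _ ih1 ih2 =>
    rcases ih1 with rfl | h1
    · exact ih2
    · rcases ih2 with rfl | h2
      · exact Or.inr h1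
      · exact Or.inr (shrubR_trans P h1 h2)

lemma shrub_zero_fix (P : Shrub V) {u x : V} (h : Relation.ReflTransGen P.Covers u x)
    (h0 : P.height u = 0) : x = u := by
  rcases h.cases_head with rfl | ⟨v, hc, _⟩
  · rfl
  · have := hc.2
    omega

lemma shrub_desc_exists (P : Shrub V) (u : V) :
    ∃ x, Relation.ReflTransGen P.Covers u x ∧ P.height x = 0 := by
  generalize h : P.height u = n
  induction n using Nat.strong_induction_on generalizing u with
  | _ n ih =>
    rcases Nat.eq_zero_or_pos n with h0 | hpos
    · exact ⟨u, .refl, by omega⟩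
    · obtain ⟨b, hab, hb⟩ := P.covers_below u (by omega)
      obtain ⟨x, hx, hx0⟩ := ih (P.height b) (by omega) b rfl
      exact ⟨x, .head ⟨P.symm _ _ hab, by omega⟩ hx, hx0⟩

lemma shrub_main (P : Shrub V) : ∀ n u, P.height u = n → ∀ x y,
    Relation.ReflTransGen P.Covers u x → P.height x = 0 →
    Relation.ReflTransGen P.Covers u y → P.height y = 0 →
    Relation.EqvGen (shrubR P) x y := by
  intro n
  induction n using Nat.strong_induction_on with
  | _ n ih =>
  intro u hu x y hx hx0 hy hy0
  rcases Nat.eq_zero_or_pos n with h0 | hpos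
  · have h1 : x = u := shrub_zero_fix P hx (by omega)
    have h2 : y = u := shrub_zero_fix P hy (by omega)
    subst h1; subst h2
    exact Relation.EqvGen.refl _
  · rcases hx.cases_head with rfl | ⟨v, huv, hvx⟩
    · omega
    rcases hy.cases_head with rfl | ⟨w, huw, hwy⟩
    · omega
    have hv : P.height v + 1 = n := by have := huv.2; omega
    have hw : P.height w + 1 = n := by have := huw.2; omega
    by_cases hvw : v = w
    · subst hvw
      exact ih (P.height v) (by omega) v rfl x y hvx hx0 hwy hy0
    · by_cases h1 : n = 1
      · have hxv : x = v := shrub_zero_fix P hvx (by omega)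
        have hyw : y = w := shrub_zero_fix P hwy (by omega)
        subst hxv; subst hyw
        exact Relation.EqvGen.rel _ _
          ⟨hx0, hy0, u, by omega, P.symm _ _ huv.1, P.symm _ _ huw.1⟩
      · -- n ≥ 2
        obtain ⟨d, hvd, hd⟩ := P.covers_below v (by omega)
        have hwd : P.adj w d := by
          by_contra hwd
          exact P.patternB u v w d hvw (by omega) (by omega) (by omega)
            (P.symm _ _ huv.1) (P.symm _ _ huw.1) hvd hwd
        obtain ⟨z, hdz, hz0⟩ := shrub_desc_exists P d
        have e1 : Relation.EqvGen (shrubR P) x z :=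
          ih (P.height v) (by omega) v rfl x z hvx hx0
            (.head ⟨P.symm _ _ hvd, hd⟩ hdz) hz0
        have e2 : Relation.EqvGen (shrubR P) y z :=
          ih (P.height w) (by omega) w rfl y z hwy hy0
            (.head ⟨P.symm _ _ hwd, by omega⟩ hdz) hz0
        exact Relation.EqvGen.trans _ _ _ e1 (Relation.EqvGen.symm _ _ e2)

lemma shrub_adjstep (P : Shrub V) {u v x z : V} (h : P.adj u v)
    (hx : Relation.ReflTransGen P.Covers u x) (hx0 : P.height x = 0)
    (hz : Relation.ReflTransGen P.Covers v z) (hz0 : P.height z = 0) :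
    Relation.EqvGen (shrubR P) x z := by
  rcases P.edge_height u v h with h1 | h1
  · exact shrub_main P _ u rfl x z hx hx0 (.head ⟨P.symm _ _ h, h1.symm⟩ hz) hz0
  · exact shrub_main P _ v rfl x z (.head ⟨h, h1.symm⟩ hx) hx0 hz hz0

lemma shrub_walk (P : Shrub V) {u v : V} (p : P.graph.Walk u v) :
    ∀ x y, Relation.ReflTransGen P.Covers u x → P.height x = 0 →
    Relation.ReflTransGen P.Covers v y → P.height y = 0 →
    Relation.EqvGen (shrubR P) x y := by
  induction p with
  | nil => exact fun x y hx hx0 hy hy0 => shrub_main P _ _ rfl x y hx hx0 hy hy0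
  | @cons a b c h p ih =>
    intro x y hx hx0 hy hy0
    obtain ⟨z, hz, hz0⟩ := shrub_desc_exists P b
    exact Relation.EqvGen.trans _ _ _ (shrub_adjstep P h hx hx0 hz hz0)
      (ih z y hz hz0 hy hy0)

lemma shrub_exists_one (P : Shrub V) : ∀ n v, P.height v = n → 0 < n →
    ∃ e, P.height e = 1 := by
  intro n
  induction n using Nat.strong_induction_on with
  | _ n ih =>
  intro v hn h
  rcases eq_or_ne n 1 with rfl | h1
  · exact ⟨v, hn⟩
  · obtain ⟨b, hab, hb⟩ := P.covers_below v (by omega)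
    exact ih (P.height b) (by omega) b rfl (by omega)

/-- a connected shrub with at least two vertices has a height-1 vertex
joined to every height-0 vertex. -/
theorem stmt3 (P : Shrub V) (hconn : P.graph.Connected) (hnt : Nontrivial V) :
    ∃ e, P.height e = 1 ∧ ∀ a, P.height a = 0 → P.adj e a := by
  classical
  obtain ⟨a, b, hab⟩ := hnt
  obtain ⟨p⟩ := hconn.preconnected a b
  have hpos : ∃ v, 0 < P.height v := by
    cases p with
    | nil => exact absurd rfl hab
    | @cons _ c _ h q =>
      rcases P.edge_height _ _ h with h1 | h1
      · exact ⟨a, by omega⟩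
      · exact ⟨c, by omega⟩
  obtain ⟨v0, hv0⟩ := hpos
  obtain ⟨e1, he1⟩ := shrub_exists_one P _ v0 rfl hv0
  set N : V → Finset V := fun e => Finset.univ.filter (fun x => P.height x = 0 ∧ P.adj e x)
    with hN
  set S : Finset V := Finset.univ.filter (fun e => P.height e = 1) with hSdef
  have hS : S.Nonempty := ⟨e1, by simp [hSdef, he1]⟩
  obtain ⟨e, heS, hemax⟩ := S.exists_max_image (fun e => (N e).card) hS
  have he1' : P.height e = 1 := by simpa [hSdef] using heS
  obtain ⟨b0, heb0, hb0⟩ := P.covers_below e (by omega)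
  have hb00 : P.height b0 = 0 := by omega
  refine ⟨e, he1', fun x hx0 => ?_⟩
  obtain ⟨q⟩ := hconn.preconnected x b0
  have hEq : Relation.EqvGen (shrubR P) x b0 := shrub_walk P q x b0 .refl hx0 .refl hb00
  rcases shrub_eqvgen_R P hEq with rfl | hR
  · exact heb0
  · obtain ⟨_, _, g, hg1, hgx, hgb0⟩ := hR
    rcases shrub_nest P hg1 he1' hb00 hgb0 heb0 with hsub | hsub
    · exact hsub x hx0 hgx
    · have hgS : g ∈ S := by simp [hSdef, hg1]
      have hcard : (N g).card ≤ (N e).card := hemax g hgS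
      have hsub' : N e ⊆ N g := by
        intro z hz
        simp only [hN, Finset.mem_filter, Finset.mem_univ, true_and] at hz ⊢
        exact ⟨hz.1, hsub z hz.1 hz.2⟩
      have heq : N e = N g := Finset.eq_of_subset_of_card_le hsub' hcard
      have hxg : x ∈ N g := by
        simp only [hN, Finset.mem_filter, Finset.mem_univ, true_and]
        exact ⟨hx0, hgx⟩
      rw [← heq] at hxg
      simp only [hN, Finset.mem_filter, Finset.mem_univ, true_and] at hxg
      exact hxg.2
end

section
/- Let P be a connected shrub with at least two vertices, and let S be the set of vertices of height 1 that are joined to all vertices of height 0. In the graph obtained from P by removing all edges between S and the vertices of height 0, no vertex of S lies in the same connected component as any vertex of height 0. -/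
variable {V : Type*} [Fintype V] [DecidableEq V]

/-- Siblings (two children of a common vertex) have the same down-neighbourhoods:
this is exactly forbidden pattern B. -/
lemma Shrub.siblings (P : Shrub V) {y b c d : V}
    (hyb : P.Covers y b) (hyc : P.Covers y c) (hbd : P.Covers b d) : P.Covers c d := by
  by_cases hbc : b = c
  · exact hbc ▸ hbd
  · obtain ⟨hadj_by, hb1⟩ := hyb
    obtain ⟨hadj_cy, hc1⟩ := hyc
    obtain ⟨hadj_db, hd1⟩ := hbd
    have hhc : P.height d + 1 = P.height c := by omega
    refine ⟨?_, hhc⟩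
    by_contra hnadj
    exact P.patternB y b c d hbc (by omega) (by omega) (by omega)
      (P.symm b y hadj_by) (P.symm c y hadj_cy) (P.symm d b hadj_db)
      (fun h => hnadj (P.symm c d h))

/-- A descending chain from a height-0 vertex is trivial. -/
lemma Shrub.zero_desc (P : Shrub V) {x z : V} (hx : P.height x = 0)
    (h : Relation.ReflTransGen P.Covers x z) : x = z := by
  rcases h.cases_head with rfl | ⟨d, hxd, _⟩
  · rfl
  · obtain ⟨_, h2⟩ := hxd
    omega

/-- let `S` be the set of height-1 vertices joined to all height-0
vertices. After removing all edges between `S` and the height-0 vertices, no vertex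
of `S` is in the same connected component as a height-0 vertex. -/
theorem stmt4 (P : Shrub V) (hconn : P.graph.Connected) (hnt : Nontrivial V)
    (S : Set V) (hS : S = {v | P.height v = 1 ∧ ∀ a, P.height a = 0 → P.adj v a})
    (G' : SimpleGraph V)
    (hG' : ∀ a b, G'.Adj a b ↔
      (P.adj a b ∧ ¬ ((a ∈ S ∧ P.height b = 0) ∨ (b ∈ S ∧ P.height a = 0)))) :
    ∀ s ∈ S, ∀ a, P.height a = 0 → ¬ G'.Reachable s a := by
  intro s hs a ha hr
  rw [hS] at hs
  obtain ⟨hs1, hsadj⟩ := hs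
  -- key invariant preservation along walks in G'
  have key : ∀ (x y : V), G'.Walk x y → 1 ≤ P.height x →
      (∀ z, P.height z = 0 → Relation.ReflTransGen P.Covers x z) →
      P.height y = 0 → False := by
    intro x y w
    induction w with
    | nil =>
      intro h1 _ h0
      omega
    | @cons u v y huv p ih =>
      intro h1 h2 hy
      obtain ⟨hadj, hnot⟩ := (hG' u v).mp huv
      rcases P.edge_height u v hadj with hh | hh
      · -- u covers v
        have huv' : P.Covers u v := ⟨P.symm u v hadj, by omega⟩
        by_cases hv0 : P.height v = 0
        · -- then u is adjacent to all level-0 vertices, so u ∈ S : contradiction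
          have hu1 : P.height u = 1 := by omega
          have hmem : u ∈ S := by
            rw [hS]
            refine ⟨hu1, fun z hz => ?_⟩
            have hd := h2 z hz
            rcases hd.cases_head with rfl | ⟨d, hud, hdz⟩
            · omega
            · have hd0 : P.height d = 0 := by
                obtain ⟨_, h'⟩ := hud
                omega
              exact (P.zero_desc hd0 hdz) ▸ P.symm d u hud.1
          exact hnot (Or.inl ⟨hmem, hv0⟩)
        · -- step down within heights ≥ 1
          refine ih (by omega) (fun z hz => ?_) hy
          have hd := h2 z hz
          rcases hd.cases_head with rfl | ⟨b, hub, hbz⟩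
          · omega
          · have hb1 : P.height b = P.height v := by
              obtain ⟨_, h'⟩ := hub
              omega
            rcases hbz.cases_head with rfl | ⟨d, hbd, hdz⟩
            · omega
            · exact Relation.ReflTransGen.head (P.siblings hub huv' hbd) hdz
      · -- v covers u : step up
        have hvu : P.Covers v u := ⟨hadj, by omega⟩
        exact ih (by omega) (fun z hz => Relation.ReflTransGen.head hvu (h2 z hz)) hy
  obtain ⟨w⟩ := hr
  refine key s a w (by omega) (fun z hz => ?_) ha
  exact Relation.ReflTransGen.single ⟨P.symm s z (hsadj z hz), by omega⟩
end

section
/- In any shrub with at least two vertices there exists either a leaf (a vertex with exactly one outgoing edge and no incoming edge) or two distinct correlated vertices (vertices having the same set of sources of incoming edges and the same set of targets of outgoing edges). -/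
variable {V : Type*} [Fintype V] [DecidableEq V]

/-- A leaf: a vertex with exactly one outgoing edge (it covers exactly one vertex)
and no incoming edge (nothing covers it). -/
def Shrub.IsLeaf (P : Shrub V) (i : V) : Prop :=
  (∃! j, P.Covers i j) ∧ ∀ k, ¬ P.Covers k i

/-- Two vertices are correlated if they cover the same vertices and are covered by
the same vertices. -/
def Shrub.Correlated (P : Shrub V) (i j : V) : Prop :=
  (∀ x, P.Covers i x ↔ P.Covers j x) ∧ (∀ x, P.Covers x i ↔ P.Covers x j)

lemma Shrub.down_mono (P : Shrub V) {a b c : V} (hb : P.Covers a b) (hc : P.Covers a c)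
    (hbc : b ≠ c) (d : V) (hd : P.Covers b d) : P.Covers c d := by
  obtain ⟨e1, e2⟩ := hb; obtain ⟨f1, f2⟩ := hc; obtain ⟨g1, g2⟩ := hd
  refine ⟨?_, by omega⟩
  by_contra hadj
  exact P.patternB a b c d hbc (by omega) (by omega) (by omega)
    (P.symm b a e1) (P.symm c a f1) (P.symm d b g1) (fun h => hadj (P.symm c d h))

lemma Shrub.laminar (P : Shrub V) {a b d : V} (hab : a ≠ b)
    (hd1 : P.Covers a d) (hd2 : P.Covers b d) :
    (∀ x, P.Covers a x → P.Covers b x) ∨ (∀ x, P.Covers b x → P.Covers a x) := by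
  by_contra hcon
  push_neg at hcon
  obtain ⟨⟨c, hc, hc'⟩, ⟨e, he, he'⟩⟩ := hcon
  have hd1a := hd1.1; have hd1h := hd1.2
  have hd2a := hd2.1; have hd2h := hd2.2
  have hca := hc.1; have hch := hc.2
  have hea := he.1; have heh := he.2
  have hcd : c ≠ d := fun h => hc' (by rw [h]; exact hd2)
  have hce : c ≠ e := fun h => he' (by rw [← h]; exact hc)
  have hde : d ≠ e := fun h => he' (by rw [← h]; exact hd1)
  exact P.patternA a b c d e hab hcd hce hde (by omega) (by omega) (by omega) (by omega)
    (P.symm c a hca) (P.symm d a hd1a) (P.symm d b hd2a) (P.symm e b hea)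
    (fun hx => he' ⟨P.symm a e hx, by omega⟩)
    (fun hx => hc' ⟨P.symm b c hx, by omega⟩)

/-- every shrub with at least two vertices has a leaf or two distinct
correlated vertices. -/
theorem stmt5 (P : Shrub V) (hnt : Nontrivial V) :
    (∃ i, P.IsLeaf i) ∨ ∃ i j, i ≠ j ∧ P.Correlated i j := by
  classical
  obtain ⟨v0, v1, hv⟩ := hnt
  by_cases hz : ∀ v, P.height v = 0
  · -- no edges at all: any two vertices are correlated
    have hno : ∀ i j, ¬ P.Covers i j := by
      intro i j h
      have := h.2
      rw [hz i, hz j] at this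
      omega
    exact Or.inr ⟨v0, v1, hv,
      fun x => iff_of_false (hno _ _) (hno _ _),
      fun x => iff_of_false (hno _ _) (hno _ _)⟩
  · push_neg at hz
    obtain ⟨w, hw⟩ := hz
    set h : ℕ := Finset.univ.sup P.height with hdef
    have hpos : 0 < h := by
      have : P.height w ≤ h := Finset.le_sup (Finset.mem_univ w)
      omega
    have hle : ∀ v, P.height v ≤ h := fun v => Finset.le_sup (Finset.mem_univ v)
    -- vertices of maximal height
    set T : Finset V := Finset.univ.filter (fun v => P.height v = h) with hT
    have hTne : T.Nonempty := by
      haveI : Nonempty V := ⟨w⟩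
      obtain ⟨v, _, hv'⟩ := Finset.exists_mem_eq_sup Finset.univ Finset.univ_nonempty P.height
      refine ⟨v, ?_⟩
      rw [hT, Finset.mem_filter]
      exact ⟨Finset.mem_univ v, hv'.symm⟩
    set D : V → Finset V := fun a => Finset.univ.filter (fun x => P.Covers a x) with hD
    obtain ⟨a, haT, hmin⟩ := Finset.exists_min_image T (fun a => (D a).card) hTne
    have ha : P.height a = h := by simpa [hT] using haT
    -- nothing covers a vertex of maximal height
    have noinc : ∀ v, P.height v = h → ∀ j, ¬ P.Covers j v := by
      intro v hvh j hj
      have := hj.2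
      have := hle j
      omega
    -- a covers some b
    obtain ⟨b, hab, hbh⟩ := P.covers_below a (by omega)
    have covb : P.Covers a b := ⟨P.symm a b hab, hbh⟩
    by_cases huniq : ∀ y, P.Covers a y → y = b
    · exact Or.inl ⟨a, ⟨b, covb, huniq⟩, noinc a ha⟩
    · push_neg at huniq
      obtain ⟨c, covc, hcb⟩ := huniq
      refine Or.inr ⟨b, c, fun e => hcb e.symm, ?_, ?_⟩
      · exact fun x => ⟨P.down_mono covb covc (fun e => hcb e.symm) x,
          P.down_mono covc covb hcb x⟩
      · -- anything covering b covers c and vice versa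
        have key : ∀ x y : V, P.Covers a x → P.Covers a y → ∀ j, P.Covers j x → P.Covers j y := by
          intro x y hx hy j hjx
          by_cases hja : j = a
          · rw [hja]; exact hy
          · have hjh : P.height j = h := by
              have := hjx.2; have := hx.2; omega
            rcases P.laminar (fun e => hja e.symm) hx hjx with hsub | hsub
            · exact hsub y hy
            · have hsubD : D j ⊆ D a := by
                intro z hz
                simp only [hD, Finset.mem_filter, Finset.mem_univ, true_and] at hz ⊢
                exact hsub z hz
              have hcard : (D a).card ≤ (D j).card :=
                hmin j (by simp [hT, hjh])
              have hEq : D j = D a := Finset.eq_of_subset_of_card_le hsubD hcard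
              have : y ∈ D j := by
                rw [hEq]
                simp only [hD, Finset.mem_filter, Finset.mem_univ, true_and]
                exact hy
              simpa [hD, Finset.mem_filter] using this
        exact fun j => ⟨key b c covb covc j, key c b covc covb j⟩
end

section
/- If P is a shrub and i, j are two correlated vertices of P, then the graph obtained by identifying i and j (the quotient graph, with the induced height function) is again a shrub. -/
variable {V : Type*} [Fintype V] [DecidableEq V]

/-- identifying two correlated vertices `i` and `j` of a shrub yields a
shrub; the quotient is realized on the vertices distinct from `j`, the class of
`i`/`j` being represented by `i`, with the induced edges and heights. -/
theorem stmt7 (P : Shrub V) (i j : V) (hij : i ≠ j) (h : P.Correlated i j) :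
    ∃ Q : Shrub {x : V // x ≠ j},
      (∀ a b : {x : V // x ≠ j}, Q.adj a b ↔
        (P.adj ↑a ↑b ∨ ((a : V) = i ∧ P.adj j ↑b) ∨ ((b : V) = i ∧ P.adj ↑a j))) ∧
      (∀ a : {x : V // x ≠ j}, Q.height a = P.height ↑a) := by
  -- heights of correlated vertices agree
  have hh : P.height i = P.height j := by
    rcases Nat.eq_zero_or_pos (P.height i) with h0 | hp
    · rcases Nat.eq_zero_or_pos (P.height j) with h0' | hp'
      · omega
      · obtain ⟨b, hb, hb'⟩ := P.covers_below j hp'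
        have h2 := ((h.1 b).mpr ⟨P.symm _ _ hb, hb'⟩).2
        omega
    · obtain ⟨b, hb, hb'⟩ := P.covers_below i hp
      have : P.Covers j b := (h.1 b).mp ⟨P.symm _ _ hb, hb'⟩
      exact hb' ▸ this.2
  -- any neighbor of j is a neighbor of i
  have adjiff : ∀ x, P.adj j x ↔ P.adj i x := by
    intro x
    constructor
    · intro hx
      rcases P.edge_height j x hx with h1 | h2
      · exact P.symm _ _ ((h.1 x).mpr ⟨P.symm _ _ hx, h1.symm⟩).1
      · exact ((h.2 x).mpr ⟨hx, h2.symm⟩).1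
    · intro hx
      rcases P.edge_height i x hx with h1 | h2
      · exact P.symm _ _ ((h.1 x).mp ⟨P.symm _ _ hx, h1.symm⟩).1
      · exact ((h.2 x).mp ⟨hx, h2.symm⟩).1
  refine ⟨{ adj := fun a b => P.adj a b
            symm := fun a b hab => P.symm _ _ hab
            loopless := fun a => P.loopless a
            height := fun a => P.height a
            edge_height := fun a b hab => P.edge_height _ _ hab
            covers_below := ?_
            patternA := ?_
            patternB := ?_ }, ?_, ?_⟩
  · rintro ⟨a, ha⟩ hpa
    obtain ⟨b, hb, hb'⟩ := P.covers_below a hpa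
    by_cases hbj : b = j
    · subst hbj
      refine ⟨⟨i, hij⟩, ?_, ?_⟩
      · exact P.symm _ _ ((adjiff a).mp (P.symm _ _ hb))
      · simpa [hh] using hb'
    · exact ⟨⟨b, hbj⟩, hb, hb'⟩
  · intro a b c d e hab hcd hce hde h1 h2 h3 h4 h5 h6 h7 h8 h9 h10
    exact P.patternA a.1 b.1 c.1 d.1 e.1
      (fun hx => hab (Subtype.ext hx)) (fun hx => hcd (Subtype.ext hx))
      (fun hx => hce (Subtype.ext hx)) (fun hx => hde (Subtype.ext hx))
      h1 h2 h3 h4 h5 h6 h7 h8 h9 h10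
  · intro a b c d hbc h1 h2 h3 h4 h5 h6 h7
    exact P.patternB a.1 b.1 c.1 d.1 (fun hx => hbc (Subtype.ext hx))
      h1 h2 h3 h4 h5 h6 h7
  · intro a b
    constructor
    · intro hab
      exact Or.inl hab
    · rintro (hab | ⟨hai, hjb⟩ | ⟨hbi, haj⟩)
      · exact hab
      · show P.adj ↑a ↑b
        rw [hai]; exact (adjiff b).mp hjb
      · show P.adj ↑a ↑b
        rw [hbi]; exact P.symm _ _ ((adjiff ↑a).mp (P.symm _ _ haj))
  · intro a; rfl
end

section
/- For every shrub P on vertex set I, the rational function f_P = (1/∏_{i∈I} S(J(P,{i}))) · ∏_{r∈Ram(P)} S(J(P∖J(P,r), r⁻)) / S(J(P, r⁻)) is a reduced fraction which is a product of pairwise distinct linear factors (each factor being a sum of a subset of the variables), i.e. no linear factor appears in both numerator and denominator and none appears twice. -/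
variable {V : Type*} [Fintype V] [DecidableEq V]

open Classical

/-- The set of vertices covered by `i`. -/
noncomputable def Shrub.coveredSet (P : Shrub V) (i : V) : Finset V :=
  Finset.univ.filter fun x => P.Covers i x

/-- The classes of ramified vertices, each class being recorded by the common set
`r⁻` of covered vertices (two ramified vertices are equivalent when they cover the
same set of vertices). -/
noncomputable def Shrub.ramSets (P : Shrub V) : Finset (Finset V) :=
  (Finset.univ.filter fun i => 2 ≤ (P.coveredSet i).card).image P.coveredSet

/-- The class `r` of ramified vertices whose common covered set is `s`. -/
noncomputable def Shrub.ramClass (P : Shrub V) (s : Finset V) : Finset V :=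
  Finset.univ.filter fun i => P.coveredSet i = s ∧ 2 ≤ s.card

/-- `P.MaxChainIn A j l` : `j :: l` is a descending chain of covering relations
inside `A` starting at `j` which cannot be extended inside `A` (for `A` the full
vertex set this means it reaches a height-0 vertex). -/
def Shrub.MaxChainIn (P : Shrub V) (A : Finset V) (j : V) (l : List V) : Prop :=
  (∀ x ∈ j :: l, x ∈ A) ∧ List.Chain' (fun x y => P.Covers x y) (j :: l) ∧
  ∀ y ∈ A, ¬ P.Covers ((j :: l).getLast (List.cons_ne_nil j l)) y

/-- The minimal upper ideal generated by `S` inside the part `A` of the shrub: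
the vertices `j ∈ A` all of whose maximal descending chains in `A` meet `S`. -/
noncomputable def Shrub.upIdealIn (P : Shrub V) (A S : Finset V) : Finset V :=
  Finset.univ.filter fun j => j ∈ A ∧ ∀ l : List V, P.MaxChainIn A j l → ∃ s ∈ S, s ∈ j :: l

/-- The minimal upper ideal generated by `S` in the whole shrub. -/
noncomputable def Shrub.upIdeal (P : Shrub V) (S : Finset V) : Finset V :=
  P.upIdealIn Finset.univ S

/-- The linear factors (each recorded by its set of variables, a factor being the
sum of the corresponding variables) of the numerator of `f_P` : one factor
`S(J(P∖J(P,r), r⁻))` for each class `r` of ramified vertices. -/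
noncomputable def numFactors (P : Shrub V) : Multiset (Finset V) :=
  P.ramSets.val.map fun s => P.upIdealIn (Finset.univ \ P.upIdeal (P.ramClass s)) s

/-- The linear factors of the denominator of `f_P` : one factor `S(J(P,{i}))` for
each vertex `i`, and one factor `S(J(P, r⁻))` for each class `r` of ramified
vertices. -/
noncomputable def denFactors (P : Shrub V) : Multiset (Finset V) :=
  Finset.univ.val.map (fun i : V => P.upIdeal {i}) + P.ramSets.val.map fun s => P.upIdeal s

namespace Shrub

/-- Heights strictly decrease along a covering chain. -/
lemma height_lt_of_chain (P : Shrub V) {j : V} {l : List V}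
    (h : List.Chain' (fun x y => P.Covers x y) (j :: l)) :
    ∀ x ∈ l, P.height x < P.height j := by
  induction l generalizing j with
  | nil => simp
  | cons y l ih =>
    simp only [List.Chain', List.isChain_cons_cons] at h
    intro x hx
    rcases List.mem_cons.mp hx with rfl | hx
    · have := h.1.2; omega
    · have h1 := ih h.2 x hx
      have h2 := h.1.2; omega

lemma eq_head_of_mem_chain (P : Shrub V) {j x : V} {l : List V}
    (h : List.Chain' (fun a b => P.Covers a b) (j :: l))
    (hx : x ∈ j :: l) (hh : P.height j ≤ P.height x) : x = j := by
  rcases List.mem_cons.mp hx with rfl | hx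
  · rfl
  · have := P.height_lt_of_chain h x hx; omega

/-- Every vertex of `A` is the start of some maximal chain in `A`. -/
lemma exists_maxChainIn (P : Shrub V) (A : Finset V) {j : V} (hj : j ∈ A) :
    ∃ l, P.MaxChainIn A j l := by
  suffices H : ∀ n (j : V), j ∈ A → P.height j ≤ n → ∃ l, P.MaxChainIn A j l from
    H (P.height j) j hj le_rfl
  intro n
  induction n with
  | zero =>
    intro j hj hn
    refine ⟨[], ?_, List.isChain_singleton j, ?_⟩
    · intro x hx; rw [List.mem_singleton] at hx; subst hx; exact hj
    · intro y _ hc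
      have := hc.2
      simp only [List.getLast_singleton] at this
      omega
  | succ n ih =>
    intro j hj hn
    by_cases hc : ∃ y ∈ A, P.Covers j y
    · obtain ⟨y, hyA, hcov⟩ := hc
      have hy : P.height y ≤ n := by have := hcov.2; omega
      obtain ⟨l, hmem, hch, hlast⟩ := ih y hyA hy
      refine ⟨y :: l, ?_, ?_, ?_⟩
      · intro x hx
        rcases List.mem_cons.mp hx with rfl | hx
        · exact hj
        · exact hmem x hx
      · exact List.isChain_cons_cons.mpr ⟨hcov, hch⟩
      · intro z hz
        rw [List.getLast_cons (List.cons_ne_nil y l)]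
        exact hlast z hz
    · push_neg at hc
      refine ⟨[], ?_, List.isChain_singleton j, ?_⟩
      · intro x hx; rw [List.mem_singleton] at hx; subst hx; exact hj
      · intro y hy hcov
        exact hc y hy (by simpa using hcov)

lemma mem_upIdealIn (P : Shrub V) {A S : Finset V} {j : V} :
    j ∈ P.upIdealIn A S ↔ j ∈ A ∧ ∀ l, P.MaxChainIn A j l → ∃ s ∈ S, s ∈ j :: l := by
  simp [upIdealIn]

lemma mem_upIdealIn_of_mem (P : Shrub V) {A S : Finset V} {x : V}
    (hS : x ∈ S) (hA : x ∈ A) : x ∈ P.upIdealIn A S :=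
  (P.mem_upIdealIn).mpr ⟨hA, fun l _ => ⟨x, hS, List.mem_cons_self⟩⟩

lemma exists_height_le (P : Shrub V) {A S : Finset V} {j : V}
    (h : j ∈ P.upIdealIn A S) : ∃ s ∈ S, P.height s ≤ P.height j := by
  rw [P.mem_upIdealIn] at h
  obtain ⟨l, hl⟩ := P.exists_maxChainIn A h.1
  obtain ⟨s, hs, hmem⟩ := h.2 l hl
  refine ⟨s, hs, ?_⟩
  rcases List.mem_cons.mp hmem with rfl | hmem
  · exact le_rfl
  · exact le_of_lt (P.height_lt_of_chain hl.2.1 s hmem)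

lemma mem_of_height_le (P : Shrub V) {A S : Finset V} {j : V}
    (h : j ∈ P.upIdealIn A S) (hh : ∀ s ∈ S, P.height j ≤ P.height s) : j ∈ S := by
  rw [P.mem_upIdealIn] at h
  obtain ⟨l, hl⟩ := P.exists_maxChainIn A h.1
  obtain ⟨s, hs, hmem⟩ := h.2 l hl
  have heq := P.eq_head_of_mem_chain hl.2.1 hmem (hh s hs)
  subst heq; exact hs

/-- Generating sets with constant heights are recovered from their upper ideals. -/
lemma upIdealIn_inj (P : Shrub V) {A A' s s' : Finset V}
    (hs : ∀ x ∈ s, ∀ y ∈ s, P.height x = P.height y)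
    (hs' : ∀ x ∈ s', ∀ y ∈ s', P.height x = P.height y)
    (h0 : s.Nonempty) (h0' : s'.Nonempty)
    (hsub : ∀ x ∈ s, x ∈ A) (hsub' : ∀ x ∈ s', x ∈ A')
    (heq : P.upIdealIn A s = P.upIdealIn A' s') : s = s' := by
  obtain ⟨x0, hx0⟩ := h0
  obtain ⟨y0, hy0⟩ := h0'
  have hxy : P.height y0 ≤ P.height x0 := by
    have hx := P.mem_upIdealIn_of_mem hx0 (hsub _ hx0)
    rw [heq] at hx
    obtain ⟨y, hy, hle⟩ := P.exists_height_le hx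
    have := hs' y0 hy0 y hy; omega
  have hyx : P.height x0 ≤ P.height y0 := by
    have hy := P.mem_upIdealIn_of_mem hy0 (hsub' _ hy0)
    rw [← heq] at hy
    obtain ⟨x, hx, hle⟩ := P.exists_height_le hy
    have := hs x0 hx0 x hx; omega
  apply Finset.Subset.antisymm
  · intro x hx
    have hx' := P.mem_upIdealIn_of_mem hx (hsub _ hx)
    rw [heq] at hx'
    refine P.mem_of_height_le hx' ?_
    intro y hy
    have h1 := hs x hx x0 hx0
    have h2 := hs' y0 hy0 y hy
    omega
  · intro y hy
    have hy' := P.mem_upIdealIn_of_mem hy (hsub' _ hy)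
    rw [← heq] at hy'
    refine P.mem_of_height_le hy' ?_
    intro x hx
    have h1 := hs' y hy y0 hy0
    have h2 := hs x0 hx0 x hx
    omega

/-- The upper ideal of a ramification set never equals the upper ideal of a single
vertex. -/
lemma upIdealIn_ne_singleton (P : Shrub V) {A A' s : Finset V} {i : V}
    (hs : ∀ x ∈ s, ∀ y ∈ s, P.height x = P.height y)
    (hcard : 2 ≤ s.card)
    (hsub : ∀ x ∈ s, x ∈ A) (hi : i ∈ A') :
    P.upIdealIn A s ≠ P.upIdealIn A' {i} := by
  intro heq
  have hine := P.mem_upIdealIn_of_mem (Finset.mem_singleton_self i) hi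
  rw [← heq] at hine
  obtain ⟨y, hy, hyle⟩ := P.exists_height_le hine
  have hxall : ∀ x ∈ s, P.height x = P.height i := by
    intro x hx
    have hx' := P.mem_upIdealIn_of_mem hx (hsub _ hx)
    rw [heq] at hx'
    obtain ⟨z, hz, hzle⟩ := P.exists_height_le hx'
    rw [Finset.mem_singleton] at hz; subst hz
    have := hs x hx y hy; omega
  have hiS : i ∈ s := P.mem_of_height_le hine (fun z hz => (hxall z hz).ge)
  obtain ⟨x, hx, hxne⟩ := Finset.exists_mem_ne (show 1 < s.card by omega) i
  have hx' := P.mem_upIdealIn_of_mem hx (hsub _ hx)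
  rw [heq] at hx'
  have hxi : x ∈ ({i} : Finset V) := P.mem_of_height_le hx' (by
    intro z hz; rw [Finset.mem_singleton] at hz; subst hz; exact (hxall x hx).le)
  exact hxne (Finset.mem_singleton.mp hxi)

lemma ramSets_mem (P : Shrub V) {s : Finset V} (h : s ∈ P.ramSets) :
    ∃ i, P.coveredSet i = s ∧ 2 ≤ s.card := by
  simp only [ramSets, Finset.mem_image, Finset.mem_filter, Finset.mem_univ,
    true_and] at h
  obtain ⟨i, h1, h2⟩ := h
  exact ⟨i, h2, h2 ▸ h1⟩

lemma ramSets_height (P : Shrub V) {s : Finset V} (h : s ∈ P.ramSets) :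
    ∀ x ∈ s, ∀ y ∈ s, P.height x = P.height y := by
  obtain ⟨i, hi, _⟩ := P.ramSets_mem h
  intro x hx y hy
  rw [← hi] at hx hy
  simp only [coveredSet, Finset.mem_filter, Finset.mem_univ, true_and,
    Shrub.Covers] at hx hy
  replace hx := (Finset.mem_filter.mp (show x ∈ Finset.univ.filter fun z => P.adj z i ∧ P.height z + 1 = P.height i by convert hx using 2; exact congrArg (fun d => @Finset.filter V _ d Finset.univ) (Subsingleton.elim _ _))).2
  replace hy := (Finset.mem_filter.mp (show y ∈ Finset.univ.filter fun z => P.adj z i ∧ P.height z + 1 = P.height i by convert hy using 2; exact congrArg (fun d => @Finset.filter V _ d Finset.univ) (Subsingleton.elim _ _))).2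
  omega

lemma ramSets_nonempty (P : Shrub V) {s : Finset V} (h : s ∈ P.ramSets) :
    s.Nonempty := by
  obtain ⟨i, _, hc⟩ := P.ramSets_mem h
  exact Finset.card_pos.mp (by omega)

lemma not_mem_upIdeal_ramClass (P : Shrub V) {s : Finset V} {x : V} (hx : x ∈ s) :
    x ∉ P.upIdeal (P.ramClass s) := by
  intro h
  rw [Shrub.upIdeal] at h
  obtain ⟨i, hi, hle⟩ := P.exists_height_le h
  simp only [ramClass, Finset.mem_filter, Finset.mem_univ, true_and] at hi
  have hxi : x ∈ P.coveredSet i := hi.1 ▸ hx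
  simp only [coveredSet, Finset.mem_filter, Finset.mem_univ, true_and,
    Shrub.Covers] at hxi
  replace hxi := (Finset.mem_filter.mp (show x ∈ Finset.univ.filter fun z => P.adj z i ∧ P.height z + 1 = P.height i by convert hxi using 2; exact congrArg (fun d => @Finset.filter V _ d Finset.univ) (Subsingleton.elim _ _))).2
  omega

lemma mem_compl_upIdeal_ramClass (P : Shrub V) {s : Finset V} {x : V} (hx : x ∈ s) :
    x ∈ Finset.univ \ P.upIdeal (P.ramClass s) :=
  Finset.mem_sdiff.mpr ⟨Finset.mem_univ x, P.not_mem_upIdeal_ramClass hx⟩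

/-- A ramified vertex lies in the upper ideal generated by its covered set. -/
lemma ram_mem_upIdeal (P : Shrub V) {s : Finset V} {i : V}
    (hi : P.coveredSet i = s) (hc : 2 ≤ s.card) : i ∈ P.upIdeal s := by
  rw [Shrub.upIdeal, P.mem_upIdealIn]
  refine ⟨Finset.mem_univ i, ?_⟩
  intro l hl
  obtain ⟨y, hy⟩ : s.Nonempty := Finset.card_pos.mp (by omega)
  have hyc : P.Covers i y := by
    rw [← hi] at hy
    simpa [coveredSet] using hy
  cases l with
  | nil =>
    exact absurd hyc (by simpa using hl.2.2 y (Finset.mem_univ y))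
  | cons y' l' =>
    have hcov : P.Covers i y' := (List.isChain_cons_cons.mp hl.2.1).1
    have hy' : y' ∈ s := by
      rw [← hi]; simp [coveredSet, hcov]
    exact ⟨y', hy', by simp⟩

end Shrub

/-- the fraction `f_P` is reduced and a product of pairwise distinct
linear factors: no factor (sum of a subset of the variables) appears twice in the
numerator, none appears twice in the denominator, and no factor appears in both. -/
theorem stmt17 (P : Shrub V) :
    (numFactors P).Nodup ∧ (denFactors P).Nodup ∧
    ∀ t ∈ numFactors P, t ∉ denFactors P := by
  have key_inj : ∀ s ∈ P.ramSets, ∀ s' ∈ P.ramSets, ∀ A A' : Finset V,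
      (∀ x ∈ s, x ∈ A) → (∀ x ∈ s', x ∈ A') →
      P.upIdealIn A s = P.upIdealIn A' s' → s = s' := by
    intro s hs s' hs' A A' hA hA' heq
    exact P.upIdealIn_inj (P.ramSets_height hs) (P.ramSets_height hs')
      (P.ramSets_nonempty hs) (P.ramSets_nonempty hs') hA hA' heq
  refine ⟨?_, ?_, ?_⟩
  · -- numerator factors are pairwise distinct
    refine Multiset.Nodup.map_on ?_ P.ramSets.nodup
    intro s hsm s' hsm' heq
    rw [Finset.mem_val] at hsm hsm'
    exact key_inj s hsm s' hsm' _ _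
      (fun x hx => P.mem_compl_upIdeal_ramClass hx)
      (fun x hx => P.mem_compl_upIdeal_ramClass hx) heq
  · -- denominator factors are pairwise distinct
    rw [denFactors, Multiset.nodup_add]
    refine ⟨?_, ?_, ?_⟩
    · refine Multiset.Nodup.map ?_ Finset.univ.nodup
      intro i i' h
      have : ({i} : Finset V) = {i'} := by
        refine P.upIdealIn_inj ?_ ?_ ⟨i, Finset.mem_singleton_self i⟩
          ⟨i', Finset.mem_singleton_self i'⟩ (fun x _ => Finset.mem_univ x)
          (fun x _ => Finset.mem_univ x) h
        · intro x hx y hy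
          rw [Finset.mem_singleton] at hx hy; subst hx; subst hy; rfl
        · intro x hx y hy
          rw [Finset.mem_singleton] at hx hy; subst hx; subst hy; rfl
      exact Finset.singleton_injective this
    · refine Multiset.Nodup.map_on ?_ P.ramSets.nodup
      intro s hsm s' hsm' heq
      rw [Finset.mem_val] at hsm hsm'
      exact key_inj s hsm s' hsm' _ _ (fun x _ => Finset.mem_univ x)
        (fun x _ => Finset.mem_univ x) heq
    · rw [Multiset.disjoint_left]
      intro a ha ha'
      obtain ⟨i, _, hi⟩ := Multiset.mem_map.mp ha
      obtain ⟨s, hsm, hss⟩ := Multiset.mem_map.mp ha'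
      rw [Finset.mem_val] at hsm
      obtain ⟨_, _, hcard⟩ := P.ramSets_mem hsm
      exact P.upIdealIn_ne_singleton (P.ramSets_height hsm) hcard
        (fun x _ => Finset.mem_univ x) (Finset.mem_univ i) (hss.trans hi.symm)
  · -- no common factor between numerator and denominator
    intro t ht hden
    obtain ⟨s, hsm, hst⟩ := Multiset.mem_map.mp ht
    rw [Finset.mem_val] at hsm
    obtain ⟨i0, hi0, hcard⟩ := P.ramSets_mem hsm
    rcases Multiset.mem_add.mp hden with h1 | h2
    · obtain ⟨i, _, hi⟩ := Multiset.mem_map.mp h1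
      exact P.upIdealIn_ne_singleton (P.ramSets_height hsm) hcard
        (fun x hx => P.mem_compl_upIdeal_ramClass hx) (Finset.mem_univ i)
        (hst.trans hi.symm)
    · obtain ⟨s', hsm', hs't⟩ := Multiset.mem_map.mp h2
      rw [Finset.mem_val] at hsm'
      have hss' : s = s' := key_inj s hsm s' hsm' _ _
        (fun x hx => P.mem_compl_upIdeal_ramClass hx)
        (fun x _ => Finset.mem_univ x) (hst.trans hs't.symm)
      subst hss'
      -- now `N_s = upIdeal s`, contradiction via the ramified vertex `i0`
      have heq : P.upIdealIn (Finset.univ \ P.upIdeal (P.ramClass s)) s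
          = P.upIdeal s := hst.trans hs't.symm
      have hmem : i0 ∈ P.upIdeal s := P.ram_mem_upIdeal hi0 hcard
      rw [← heq] at hmem
      have hA : i0 ∈ Finset.univ \ P.upIdeal (P.ramClass s) :=
        ((P.mem_upIdealIn).mp hmem).1
      have hclass : i0 ∈ P.ramClass s := by
        simp only [Shrub.ramClass, Finset.mem_filter, Finset.mem_univ, true_and]
        exact ⟨hi0, hcard⟩
      have : i0 ∈ P.upIdeal (P.ramClass s) :=
        P.mem_upIdealIn_of_mem hclass (Finset.mem_univ i0)
      exact (Finset.mem_sdiff.mp hA).2 this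
end
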